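/- For every σ > 0, t ∈ (0, T] and α ∈ (0,1), one has ∫₀ᵗ t^{1-α} (t-s)^{α-1} e^{-σ(t-s)} s^{α-1} ds ≤ C (T/σ)^{α/2}, where C depends only on α (it can be taken as sup_{x≥0} x^{α/2}e^{-x} times the Beta function B(α/2, α)). -/

import Mathlib

open MeasureTheory Set

lemma lint_rpow {a p : ℝ} (ha : 0 < a) (hp : -1 < p) :
    ∫⁻ s in Ioc 0 a, ENNReal.ofReal (s ^ p) = ENNReal.ofReal (a ^ (p+1) / (p+1)) := by
  have hInt : IntervalIntegrable (fun s : ℝ => s ^ p) volume 0 a :=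
    intervalIntegral.intervalIntegrable_rpow' hp
  have hIntOn : IntegrableOn (fun s : ℝ => s ^ p) (Ioc 0 a) volume :=
    (intervalIntegrable_iff_integrableOn_Ioc_of_le ha.le).mp hInt
  rw [← ofReal_integral_eq_lintegral_ofReal hIntOn]
  · congr 1
    rw [← intervalIntegral.integral_of_le ha.le, integral_rpow (Or.inl hp),
      Real.zero_rpow (by linarith), sub_zero]
  · filter_upwards [ae_restrict_mem measurableSet_Ioc] with s hs
    exact Real.rpow_nonneg hs.1.le p

lemma lint_rpow_sub {t p : ℝ} (ht : 0 < t) (hp : -1 < p) :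
    ∫⁻ s in Ioc (t/2) t, ENNReal.ofReal ((t - s) ^ p)
      = ENNReal.ofReal ((t/2) ^ (p+1) / (p+1)) := by
  have h2 : t / 2 < t := by linarith
  have hInt0 : IntervalIntegrable (fun s : ℝ => s ^ p) volume 0 (t/2) :=
    intervalIntegral.intervalIntegrable_rpow' hp
  have hInt : IntervalIntegrable (fun s : ℝ => (t - s) ^ p) volume (t/2) t := by
    have h := (hInt0.comp_sub_left t).symm
    have e : t - t/2 = t/2 := by ring
    simpa [e] using h
  have hIntOn : IntegrableOn (fun s : ℝ => (t - s) ^ p) (Ioc (t/2) t) volume :=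
    (intervalIntegrable_iff_integrableOn_Ioc_of_le h2.le).mp hInt
  rw [← ofReal_integral_eq_lintegral_ofReal hIntOn]
  · congr 1
    rw [← intervalIntegral.integral_of_le h2.le]
    have := intervalIntegral.integral_comp_sub_left (fun s : ℝ => s ^ p) t (a := t/2) (b := t)
    have e1 : t - t = 0 := by ring
    have e2 : t - t/2 = t/2 := by ring
    rw [this, e1, e2, integral_rpow (Or.inl hp), Real.zero_rpow (by linarith), sub_zero]
  · filter_upwards [ae_restrict_mem measurableSet_Ioc] with s hs
    exact Real.rpow_nonneg (by linarith [hs.2]) p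

lemma exp_le_rpow {x q : ℝ} (hx : 0 < x) (hq : 0 < q) (hq1 : q ≤ 1) :
    Real.exp (-x) ≤ x ^ (-q) := by
  have key : x ^ q ≤ Real.exp x := by
    rcases le_total x 1 with h | h
    · calc x ^ q ≤ 1 ^ q := Real.rpow_le_rpow hx.le h hq.le
      _ = 1 := Real.one_rpow q
      _ ≤ Real.exp x := by linarith [Real.add_one_le_exp x, hx]
    · calc x ^ q ≤ x ^ (1:ℝ) := Real.rpow_le_rpow_of_exponent_le h hq1
      _ = x := Real.rpow_one x
      _ ≤ Real.exp x := by linarith [Real.add_one_le_exp x]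
  rw [Real.exp_neg, Real.rpow_neg hx.le]
  exact inv_anti₀ (Real.rpow_pos_of_pos hx q) key

theorem stmt_0 (α : ℝ) (hα : α ∈ Set.Ioo (0:ℝ) 1) :
    ∃ C > (0:ℝ), ∀ σ > (0:ℝ), ∀ T > (0:ℝ), ∀ t ∈ Set.Ioc (0:ℝ) T,
      ∫⁻ s in Set.Ioo (0:ℝ) t,
        ENNReal.ofReal (t ^ (1 - α) * (t - s) ^ (α - 1) * Real.exp (-σ * (t - s)) * s ^ (α - 1))
      ≤ ENNReal.ofReal (C * (T / σ) ^ (α / 2)) := by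
  obtain ⟨hα0, hα1⟩ := hα
  refine ⟨(3/α) * (2:ℝ) ^ (1 - 3*α/2), by positivity, ?_⟩
  intro σ hσ T hT t ht
  obtain ⟨ht0, htT⟩ := ht
  have hu : (0:ℝ) < t/2 := by linarith
  set K : ℝ := σ ^ (-(α/2)) * t ^ (1-α) with hK
  have hK0 : 0 ≤ K := by positivity
  have hA1 : (0:ℝ) ≤ (t/2) ^ (α/2-1) := Real.rpow_nonneg hu.le _
  have hA2 : (0:ℝ) ≤ (t/2) ^ (α-1) := Real.rpow_nonneg hu.le _
  have hB1 : (0:ℝ) ≤ (t/2) ^ α / α := by positivity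
  have hB2 : (0:ℝ) ≤ (t/2) ^ (α/2) / (α/2) := by positivity
  -- pointwise bound
  have hpt : ∀ s ∈ Ioo (0:ℝ) t,
      t ^ (1 - α) * (t - s) ^ (α - 1) * Real.exp (-σ * (t - s)) * s ^ (α - 1)
        ≤ K * ((t - s) ^ (α/2 - 1) * s ^ (α - 1)) := by
    intro s hs
    have hts : (0:ℝ) < t - s := by linarith [hs.2]
    have hx : (0:ℝ) < σ * (t - s) := by positivity
    have he : Real.exp (-σ * (t - s)) ≤ (σ * (t - s)) ^ (-(α/2)) := by
      rw [neg_mul]; exact exp_le_rpow hx (by linarith) (by linarith)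
    have hsplit : (σ * (t - s)) ^ (-(α/2)) = σ ^ (-(α/2)) * (t - s) ^ (-(α/2)) :=
      Real.mul_rpow hσ.le hts.le
    have hcomb : (t - s) ^ (α - 1) * (t - s) ^ (-(α/2)) = (t - s) ^ (α/2 - 1) := by
      rw [← Real.rpow_add hts]; congr 1; ring
    calc t ^ (1 - α) * (t - s) ^ (α - 1) * Real.exp (-σ * (t - s)) * s ^ (α - 1)
        ≤ t ^ (1 - α) * (t - s) ^ (α - 1) * ((σ * (t - s)) ^ (-(α/2))) * s ^ (α - 1) := by
          have h1 : (0:ℝ) ≤ t ^ (1-α) * (t - s) ^ (α-1) := by positivity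
          have h2 : (0:ℝ) ≤ s ^ (α-1) := Real.rpow_nonneg hs.1.le _
          exact mul_le_mul_of_nonneg_right (mul_le_mul_of_nonneg_left he h1) h2
      _ = K * ((t - s) ^ (α/2 - 1) * s ^ (α - 1)) := by
          rw [hsplit, ← hcomb, hK]; ring
  calc ∫⁻ s in Ioo (0:ℝ) t,
        ENNReal.ofReal (t ^ (1 - α) * (t - s) ^ (α - 1) * Real.exp (-σ * (t - s)) * s ^ (α - 1))
      ≤ ∫⁻ s in Ioo (0:ℝ) t, ENNReal.ofReal (K * ((t - s) ^ (α/2 - 1) * s ^ (α - 1))) := by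
        refine lintegral_mono_ae ?_
        filter_upwards [ae_restrict_mem measurableSet_Ioo] with s hs
        exact ENNReal.ofReal_le_ofReal (hpt s hs)
    _ = ENNReal.ofReal K * ∫⁻ s in Ioo (0:ℝ) t,
          ENNReal.ofReal ((t - s) ^ (α/2 - 1) * s ^ (α - 1)) := by
        simp_rw [ENNReal.ofReal_mul hK0]
        exact lintegral_const_mul' _ _ ENNReal.ofReal_ne_top
    _ = ENNReal.ofReal K * ∫⁻ s in Ioc (0:ℝ) t,
          ENNReal.ofReal ((t - s) ^ (α/2 - 1) * s ^ (α - 1)) := by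
        rw [Measure.restrict_congr_set Ioo_ae_eq_Ioc]
    _ = ENNReal.ofReal K * ((∫⁻ s in Ioc (0:ℝ) (t/2),
          ENNReal.ofReal ((t - s) ^ (α/2 - 1) * s ^ (α - 1)))
        + ∫⁻ s in Ioc (t/2) t,
          ENNReal.ofReal ((t - s) ^ (α/2 - 1) * s ^ (α - 1))) := by
        rw [← lintegral_union measurableSet_Ioc (Set.Ioc_disjoint_Ioc_of_le le_rfl),
          Set.Ioc_union_Ioc_eq_Ioc hu.le (by linarith)]
    _ ≤ ENNReal.ofReal K * (ENNReal.ofReal ((t/2) ^ (α/2-1)) * ENNReal.ofReal ((t/2) ^ α / α)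
        + ENNReal.ofReal ((t/2) ^ (α-1)) * ENNReal.ofReal ((t/2) ^ (α/2) / (α/2))) := by
        gcongr
        · -- piece 1
          calc ∫⁻ s in Ioc (0:ℝ) (t/2),
                ENNReal.ofReal ((t - s) ^ (α/2 - 1) * s ^ (α - 1))
              ≤ ∫⁻ s in Ioc (0:ℝ) (t/2),
                ENNReal.ofReal ((t/2) ^ (α/2 - 1) * s ^ (α - 1)) := by
                refine lintegral_mono_ae ?_
                filter_upwards [ae_restrict_mem measurableSet_Ioc] with s hs
                refine ENNReal.ofReal_le_ofReal (mul_le_mul_of_nonneg_right ?_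
                  (Real.rpow_nonneg hs.1.le _))
                exact Real.rpow_le_rpow_of_nonpos hu (by linarith [hs.2]) (by linarith)
            _ = ENNReal.ofReal ((t/2) ^ (α/2-1)) *
                  ∫⁻ s in Ioc (0:ℝ) (t/2), ENNReal.ofReal (s ^ (α - 1)) := by
                simp_rw [ENNReal.ofReal_mul hA1]
                exact lintegral_const_mul' _ _ ENNReal.ofReal_ne_top
            _ = ENNReal.ofReal ((t/2) ^ (α/2-1)) * ENNReal.ofReal ((t/2) ^ α / α) := by
                rw [lint_rpow hu (by linarith)]
                norm_num
        · -- piece 2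
          calc ∫⁻ s in Ioc (t/2) t,
                ENNReal.ofReal ((t - s) ^ (α/2 - 1) * s ^ (α - 1))
              ≤ ∫⁻ s in Ioc (t/2) t,
                ENNReal.ofReal ((t/2) ^ (α - 1) * (t - s) ^ (α/2 - 1)) := by
                refine lintegral_mono_ae ?_
                filter_upwards [ae_restrict_mem measurableSet_Ioc] with s hs
                refine ENNReal.ofReal_le_ofReal ?_
                rw [mul_comm ((t/2) ^ (α-1))]
                refine mul_le_mul_of_nonneg_left ?_
                  (Real.rpow_nonneg (by linarith [hs.2]) _)
                exact Real.rpow_le_rpow_of_nonpos hu hs.1.le (by linarith)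
            _ = ENNReal.ofReal ((t/2) ^ (α-1)) *
                  ∫⁻ s in Ioc (t/2) t, ENNReal.ofReal ((t - s) ^ (α/2 - 1)) := by
                simp_rw [ENNReal.ofReal_mul hA2]
                exact lintegral_const_mul' _ _ ENNReal.ofReal_ne_top
            _ = ENNReal.ofReal ((t/2) ^ (α-1)) * ENNReal.ofReal ((t/2) ^ (α/2) / (α/2)) := by
                rw [lint_rpow_sub (by linarith : (0:ℝ) < t) (by linarith)]
                norm_num
    _ = ENNReal.ofReal (K * ((t/2) ^ (α/2-1) * ((t/2) ^ α / α)
          + (t/2) ^ (α-1) * ((t/2) ^ (α/2) / (α/2)))) := by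
        rw [← ENNReal.ofReal_mul hA1, ← ENNReal.ofReal_mul hA2,
          ← ENNReal.ofReal_add (by positivity) (by positivity),
          ← ENNReal.ofReal_mul hK0]
    _ ≤ ENNReal.ofReal ((3/α) * (2:ℝ) ^ (1 - 3*α/2) * (T / σ) ^ (α / 2)) := by
        refine ENNReal.ofReal_le_ofReal ?_
        have key : (t/2) ^ (α/2-1) * ((t/2) ^ α / α)
            + (t/2) ^ (α-1) * ((t/2) ^ (α/2) / (α/2))
            = (3/α) * (t/2) ^ (3*α/2-1) := by
          have h1 : (t/2) ^ (α/2-1) * (t/2) ^ α = (t/2) ^ (3*α/2-1) := by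
            rw [← Real.rpow_add hu]; congr 1; ring
          have h2 : (t/2) ^ (α-1) * (t/2) ^ (α/2) = (t/2) ^ (3*α/2-1) := by
            rw [← Real.rpow_add hu]; congr 1; ring
          calc (t/2) ^ (α/2-1) * ((t/2) ^ α / α) + (t/2) ^ (α-1) * ((t/2) ^ (α/2) / (α/2))
              = ((t/2) ^ (α/2-1) * (t/2) ^ α) / α
                + ((t/2) ^ (α-1) * (t/2) ^ (α/2)) / (α/2) := by ring
            _ = (t/2) ^ (3*α/2-1) / α + (t/2) ^ (3*α/2-1) / (α/2) := by rw [h1, h2]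
            _ = (3/α) * (t/2) ^ (3*α/2-1) := by field_simp; ring
        have key2 : t ^ (1-α) * (t/2) ^ (3*α/2-1) = (2:ℝ) ^ (1 - 3*α/2) * t ^ (α/2) := by
          rw [Real.div_rpow ht0.le (by norm_num : (0:ℝ) ≤ 2), div_eq_mul_inv,
            ← Real.rpow_neg (by norm_num : (0:ℝ) ≤ 2)]
          have h3 : t ^ (1-α) * t ^ (3*α/2-1) = t ^ (α/2) := by
            rw [← Real.rpow_add ht0]; congr 1; ring
          have h4 : -(3*α/2-1) = 1 - 3*α/2 := by ring
          rw [h4, ← mul_assoc, h3, mul_comm]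
        have key3 : (T / σ) ^ (α/2) = T ^ (α/2) * σ ^ (-(α/2)) := by
          rw [Real.div_rpow hT.le hσ.le, div_eq_mul_inv, ← Real.rpow_neg hσ.le]
        have htT' : t ^ (α/2) ≤ T ^ (α/2) :=
          Real.rpow_le_rpow ht0.le htT (by linarith)
        rw [key, key3, hK]
        have hσ2 : (0:ℝ) ≤ σ ^ (-(α/2)) := Real.rpow_nonneg hσ.le _
        have h2p : (0:ℝ) ≤ (2:ℝ) ^ (1 - 3*α/2) := Real.rpow_nonneg (by norm_num) _
        calc σ ^ (-(α/2)) * t ^ (1-α) * ((3/α) * (t/2) ^ (3*α/2-1))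
            = (3/α) * σ ^ (-(α/2)) * (t ^ (1-α) * (t/2) ^ (3*α/2-1)) := by ring
          _ = (3/α) * σ ^ (-(α/2)) * ((2:ℝ) ^ (1 - 3*α/2) * t ^ (α/2)) := by rw [key2]
          _ ≤ (3/α) * σ ^ (-(α/2)) * ((2:ℝ) ^ (1 - 3*α/2) * T ^ (α/2)) := by
              have : (0:ℝ) ≤ (3/α) * σ ^ (-(α/2)) := by positivity
              exact mul_le_mul_of_nonneg_left
                (mul_le_mul_of_nonneg_left htT' h2p) this
          _ = 3 / α * 2 ^ (1 - 3 * α / 2) * (T ^ (α / 2) * σ ^ (-(α / 2))) := by ring
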